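/- Let A be a bounded linear operator on H. Then η(A)² ≤ (1/4)·‖ |A|² + |A*|² + 4|A|⁴ ‖_ber + (1/2)·ber(A²). -/

import Mathlib

open scoped InnerProductSpace
open ContinuousLinearMap

variable {H : Type*} [NormedAddCommGroup H] [InnerProductSpace ℂ H] [CompleteSpace H]
variable {Ω : Type*} [Nonempty Ω]

/-- Berezin number: `ber(T) = sup_{λ∈Ω} |⟨T k̂_λ, k̂_λ⟩|`. -/
noncomputable def ber (k : Ω → H) (T : H →L[ℂ] H) : ℝ :=
  ⨆ lam : Ω, ‖⟪T (k lam), k lam⟫_ℂ‖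

/-- Berezin norm: `‖T‖_ber = sup_{λ,μ∈Ω} |⟨T k̂_λ, k̂_μ⟩|`. -/
noncomputable def bernorm (k : Ω → H) (T : H →L[ℂ] H) : ℝ :=
  ⨆ p : Ω × Ω, ‖⟪T (k p.1), k p.2⟫_ℂ‖

/-- Least Berezin number: `c(T) = inf_{λ∈Ω} |⟨T k̂_λ, k̂_λ⟩|`. -/
noncomputable def lber (k : Ω → H) (T : H →L[ℂ] H) : ℝ :=
  ⨅ lam : Ω, ‖⟪T (k lam), k lam⟫_ℂ‖

/-- Davis-Wielandt-Berezin radius: `η(T) = sup_{λ∈Ω} √(|⟨T k̂_λ, k̂_λ⟩|² + ‖T k̂_λ‖⁴)`. -/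
noncomputable def eta (k : Ω → H) (T : H →L[ℂ] H) : ℝ :=
  ⨆ lam : Ω, Real.sqrt (‖⟪T (k lam), k lam⟫_ℂ‖ ^ 2 + ‖T (k lam)‖ ^ 4)

/-- The modulus `|A| = (A*A)^{1/2}`. -/
noncomputable def absop (A : H →L[ℂ] H) : H →L[ℂ] H := CFC.sqrt (adjoint A * A)

set_option maxHeartbeats 1000000

set_option linter.unusedSectionVars false in
theorem buzano' (e a b : H) (he : ‖e‖ = 1) :
    ‖⟪a, e⟫_ℂ * ⟪e, b⟫_ℂ‖ ≤ (‖⟪a, b⟫_ℂ‖ + ‖a‖ * ‖b‖) / 2 := by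
  set u : H := (2 * starRingEnd ℂ ⟪a, e⟫_ℂ) • e - a with hu
  have hnu : ‖u‖ = ‖a‖ := by
    have := @norm_sub_sq ℂ H _ _ _ ((2 * starRingEnd ℂ ⟪a, e⟫_ℂ) • e) a
    rw [← Real.sqrt_sq (norm_nonneg u), ← Real.sqrt_sq (norm_nonneg a)]
    congr 1
    rw [hu, this, norm_smul, inner_smul_left]
    simp [he, Complex.normSq_eq_norm_sq, Complex.sq_norm, mul_comm, mul_assoc,
      Complex.mul_conj', Complex.mul_conj]
    ring_nf
    have h1 : (⟪a, e⟫_ℂ).re = (⟪e, a⟫_ℂ).re := by rw [← inner_conj_symm a e, Complex.conj_re]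
    have h2 : (⟪a, e⟫_ℂ).im = -(⟪e, a⟫_ℂ).im := by rw [← inner_conj_symm a e, Complex.conj_im]
    have h3 : ‖⟪e, a⟫_ℂ‖ ^ 2 = (⟪e, a⟫_ℂ).re ^ 2 + (⟪e, a⟫_ℂ).im ^ 2 := by
      rw [Complex.sq_norm, Complex.normSq_apply]; ring
    rw [h1, h2, h3]; ring
  have hub : ⟪u, b⟫_ℂ = 2 * ⟪a, e⟫_ℂ * ⟪e, b⟫_ℂ - ⟪a, b⟫_ℂ := by
    rw [hu, inner_sub_left, inner_smul_left]
    simp only [map_mul, Complex.conj_conj, map_ofNat]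
  have h2 : 2 * (⟪a, e⟫_ℂ * ⟪e, b⟫_ℂ) = ⟪u, b⟫_ℂ + ⟪a, b⟫_ℂ := by rw [hub]; ring
  have h5 := norm_add_le (⟪u, b⟫_ℂ) (⟪a, b⟫_ℂ)
  have h3 : ‖⟪u, b⟫_ℂ‖ ≤ ‖a‖ * ‖b‖ := hnu ▸ norm_inner_le_norm u b
  have h4 : (2:ℝ) * ‖⟪a, e⟫_ℂ * ⟪e, b⟫_ℂ‖ = ‖⟪u, b⟫_ℂ + ⟪a, b⟫_ℂ‖ := by
    rw [← h2, norm_mul]; simp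
  linarith

theorem stmt17 (k : Ω → H) (hk : ∀ lam, ‖k lam‖ = 1) (A : H →L[ℂ] H) :
    (eta k A) ^ 2 ≤
      (1 / 4) * bernorm k ((absop A) ^ 2 + (absop (adjoint A)) ^ 2 + 4 • (absop A) ^ 4) +
        (1 / 2) * ber k (A ^ 2) := by
  set T : H →L[ℂ] H := (absop A) ^ 2 + (absop (adjoint A)) ^ 2 + 4 • (absop A) ^ 4 with hT
  have hnn1 : (0 : H →L[ℂ] H) ≤ adjoint A * A := by
    rw [← ContinuousLinearMap.star_eq_adjoint]; exact star_mul_self_nonneg A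
  have hnn2 : (0 : H →L[ℂ] H) ≤ adjoint (adjoint A) * adjoint A := by
    rw [← ContinuousLinearMap.star_eq_adjoint]; exact star_mul_self_nonneg (adjoint A)
  have habs1 : (absop A) ^ 2 = adjoint A * A := by
    rw [absop]; exact CFC.sq_sqrt _ hnn1
  have habs2 : (absop (adjoint A)) ^ 2 = A * adjoint A := by
    rw [absop, CFC.sq_sqrt _ hnn2, ContinuousLinearMap.adjoint_adjoint]
  set B : H →L[ℂ] H := adjoint A * A with hB
  have hB4 : (absop A) ^ 4 = B ^ 2 := by
    rw [show (4 : ℕ) = 2 * 2 from rfl, pow_mul, habs1]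
  have hBsa : adjoint B = B := by
    rw [← ContinuousLinearMap.star_eq_adjoint, hB, ← ContinuousLinearMap.star_eq_adjoint]
    simp [mul_assoc]
  -- main per-lambda estimate
  set C : ℝ := (1 / 4) * bernorm k T + (1 / 2) * ber k (A ^ 2) with hC
  have hbern_nonneg : 0 ≤ bernorm k T := Real.iSup_nonneg fun _ => norm_nonneg _
  have hber_nonneg : 0 ≤ ber k (A ^ 2) := Real.iSup_nonneg fun _ => norm_nonneg _
  have hCnn : 0 ≤ C := by positivity
  have hbdd1 : BddAbove (Set.range fun p : Ω × Ω => ‖⟪T (k p.1), k p.2⟫_ℂ‖) := by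
    refine ⟨‖T‖, ?_⟩
    rintro _ ⟨p, rfl⟩
    calc ‖⟪T (k p.1), k p.2⟫_ℂ‖ ≤ ‖T (k p.1)‖ * ‖k p.2‖ := norm_inner_le_norm _ _
      _ ≤ (‖T‖ * ‖k p.1‖) * ‖k p.2‖ := by
          gcongr; exact ContinuousLinearMap.le_opNorm T _
      _ = ‖T‖ := by simp [hk]
  have hbdd2 : BddAbove (Set.range fun lam : Ω => ‖⟪(A ^ 2) (k lam), k lam⟫_ℂ‖) := by
    refine ⟨‖A ^ 2‖, ?_⟩
    rintro _ ⟨lam, rfl⟩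
    calc ‖⟪(A ^ 2) (k lam), k lam⟫_ℂ‖ ≤ ‖(A ^ 2) (k lam)‖ * ‖k lam‖ := norm_inner_le_norm _ _
      _ ≤ (‖A ^ 2‖ * ‖k lam‖) * ‖k lam‖ := by
          gcongr; exact ContinuousLinearMap.le_opNorm _ _
      _ = ‖A ^ 2‖ := by simp [hk]
  have key : ∀ lam : Ω, ‖⟪A (k lam), k lam⟫_ℂ‖ ^ 2 + ‖A (k lam)‖ ^ 4 ≤ C := by
    intro lam
    set x : H := k lam with hx
    have hx1 : ‖x‖ = 1 := hk lam
    -- inner products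
    have hBx : ⟪B x, x⟫_ℂ = (‖A x‖ : ℂ) ^ 2 := by
      rw [hB]
      show ⟪adjoint A (A x), x⟫_ℂ = _
      rw [ContinuousLinearMap.adjoint_inner_left, inner_self_eq_norm_sq_to_K]
      norm_cast
    have hB2x : ⟪(B ^ 2) x, x⟫_ℂ = ⟪B x, B x⟫_ℂ := by
      have h := ContinuousLinearMap.adjoint_inner_left B x (B x)
      rw [hBsa] at h
      rw [← h, pow_two]; rfl
    have hAAx : ⟪(A * adjoint A) x, x⟫_ℂ = (‖adjoint A x‖ : ℂ) ^ 2 := by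
      have h := ContinuousLinearMap.adjoint_inner_left (adjoint A) x (adjoint A x)
      rw [ContinuousLinearMap.adjoint_adjoint] at h
      show ⟪A ((adjoint A) x), x⟫_ℂ = _
      rw [h, inner_self_eq_norm_sq_to_K]
      norm_cast
    -- Buzano step
    have hbz := buzano' x (A x) (adjoint A x) hx1
    have e1 : ⟪x, adjoint A x⟫_ℂ = ⟪A x, x⟫_ℂ := ContinuousLinearMap.adjoint_inner_right A x x
    have e2 : ⟪A x, adjoint A x⟫_ℂ = ⟪(A ^ 2) x, x⟫_ℂ := by
      rw [ContinuousLinearMap.adjoint_inner_right]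
      simp [pow_two, ContinuousLinearMap.mul_apply]
    rw [e1, e2, norm_mul] at hbz
    have h1 : ‖⟪A x, x⟫_ℂ‖ ^ 2 ≤
        (1 / 2) * ‖⟪(A ^ 2) x, x⟫_ℂ‖ + (1 / 4) * (‖A x‖ ^ 2 + ‖adjoint A x‖ ^ 2) := by
      have hamgm : ‖A x‖ * ‖adjoint A x‖ ≤ (‖A x‖ ^ 2 + ‖adjoint A x‖ ^ 2) / 2 := by
        nlinarith [sq_nonneg (‖A x‖ - ‖adjoint A x‖)]
      nlinarith [hbz, hamgm]
    -- fourth power step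
    have h2 : ‖A x‖ ^ 4 ≤ (⟪(B ^ 2) x, x⟫_ℂ).re := by
      have hAx2 : ‖A x‖ ^ 2 ≤ ‖B x‖ := by
        have : (‖A x‖ : ℝ) ^ 2 = ‖⟪B x, x⟫_ℂ‖ := by
          rw [hBx]; rw [norm_pow]; simp
        rw [this]
        calc ‖⟪B x, x⟫_ℂ‖ ≤ ‖B x‖ * ‖x‖ := norm_inner_le_norm _ _
          _ = ‖B x‖ := by rw [hx1, mul_one]
      have hre : (⟪(B ^ 2) x, x⟫_ℂ).re = ‖B x‖ ^ 2 := by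
        rw [hB2x, inner_self_eq_norm_sq_to_K]
        norm_cast
      rw [hre]
      calc ‖A x‖ ^ 4 = (‖A x‖ ^ 2) ^ 2 := by ring
        _ ≤ ‖B x‖ ^ 2 := by gcongr
    -- re of T
    have hTx : (⟪T x, x⟫_ℂ).re = ‖A x‖ ^ 2 + ‖adjoint A x‖ ^ 2 + 4 * (⟪(B ^ 2) x, x⟫_ℂ).re := by
      have : ⟪T x, x⟫_ℂ = ⟪B x, x⟫_ℂ + ⟪(A * adjoint A) x, x⟫_ℂ + (4 : ℂ) * ⟪(B ^ 2) x, x⟫_ℂ := by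
        rw [hT, habs1, habs2, hB4]
        simp only [ContinuousLinearMap.add_apply, ContinuousLinearMap.smul_apply,
          inner_add_left]
        congr 1
        rw [show (4 : ℕ) • ((B ^ 2) x) = (4 : ℂ) • ((B ^ 2) x) by
          rw [← Nat.cast_smul_eq_nsmul ℂ]; norm_num, inner_smul_left]
        simp only [map_ofNat]
      rw [this, hBx, hAAx]
      simp [Complex.add_re, Complex.mul_re, ← Complex.ofReal_pow]
    -- bound by sups
    have hb1 : (⟪T x, x⟫_ℂ).re ≤ bernorm k T := by
      calc (⟪T x, x⟫_ℂ).re ≤ ‖⟪T x, x⟫_ℂ‖ := Complex.re_le_norm _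
        _ ≤ bernorm k T := le_ciSup hbdd1 (lam, lam)
    have hb2 : ‖⟪(A ^ 2) x, x⟫_ℂ‖ ≤ ber k (A ^ 2) := le_ciSup hbdd2 lam
    rw [hC]
    nlinarith [h1, h2, hTx, hb1, hb2]
  -- conclude
  have hle : eta k A ≤ Real.sqrt C := by
    refine ciSup_le fun lam => ?_
    exact Real.sqrt_le_sqrt (key lam)
  have h0 : 0 ≤ eta k A := Real.iSup_nonneg fun _ => Real.sqrt_nonneg _
  calc (eta k A) ^ 2 ≤ (Real.sqrt C) ^ 2 := by gcongr
    _ = C := Real.sq_sqrt hCnn
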